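/- For a connected graph G of order n ≥ 2, 𝔡*(G) = 2 if and only if G is isomorphic to the complete graph K_n. -/

import Mathlib

open SimpleGraph Finset

/-- Distance from a vertex to a finite set of vertices:
`min_{w ∈ S} d(u, w)`. -/
noncomputable def setDist {V : Type*} (G : SimpleGraph V) (u : V) (S : Finset V) : ℕ :=
  sInf (G.dist u '' (S : Set V))

/-- The set `𝒟_G(x,y)` of vertices distinguishing `x` and `y`. -/
noncomputable def DG {V : Type*} (G : SimpleGraph V) [Fintype V] (x y : V) : Finset V :=
  Finset.univ.filter fun z => G.dist z x ≠ G.dist z y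

/-- `𝔡(G) = min_{x ≠ y} |𝒟_G(x,y)|`. -/
noncomputable def frakd {V : Type*} (G : SimpleGraph V) [Fintype V] : ℕ :=
  sInf {m | ∃ x y : V, x ≠ y ∧ (DG G x y).card = m}

/-- `𝔡*(G) = max_{x ≠ y} |𝒟_G(x,y)|`. -/
noncomputable def frakdStar {V : Type*} (G : SimpleGraph V) [Fintype V] : ℕ :=
  sSup {m | ∃ x y : V, x ≠ y ∧ (DG G x y).card = m}

/-- A partition of the vertex set is a `k`-partition generator if every pair of
distinct vertices is distinguished by at least `k` parts. -/
noncomputable def IsKPartitionGenerator {V : Type*} (G : SimpleGraph V) [Fintype V]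
    [DecidableEq V] (k : ℕ) (P : Finpartition (Finset.univ : Finset V)) : Prop :=
  ∀ u v : V, u ≠ v → k ≤ (P.parts.filter fun S => setDist G u S ≠ setDist G v S).card

/-- The `k`-partition dimension `pd_k(G)`. -/
noncomputable def pd {V : Type*} (G : SimpleGraph V) [Fintype V] [DecidableEq V] (k : ℕ) : ℕ :=
  sInf {m | ∃ P : Finpartition (Finset.univ : Finset V),
    IsKPartitionGenerator G k P ∧ P.parts.card = m}

/-- A set of vertices is a `k`-metric generator if every pair of distinct
vertices is distinguished by at least `k` of its vertices. -/
def IsKMetricGenerator {V : Type*} (G : SimpleGraph V) [Fintype V] (k : ℕ) (W : Finset V) : Prop :=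
  ∀ u v : V, u ≠ v → k ≤ (W.filter fun z => G.dist z u ≠ G.dist z v).card

/-- The `k`-metric dimension `dim_k(G)`. -/
noncomputable def metricDim {V : Type*} (G : SimpleGraph V) [Fintype V] (k : ℕ) : ℕ :=
  sInf {m | ∃ W : Finset V, IsKMetricGenerator G k W ∧ W.card = m}

theorem stmt_17 {V : Type*} [Fintype V] [DecidableEq V] (G : SimpleGraph V)
    (hG : G.Connected) (hn : 2 ≤ Fintype.card V) :
    frakdStar G = 2 ↔ Nonempty (G ≃g (⊤ : SimpleGraph (Fin (Fintype.card V)))) := by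
  obtain ⟨a, b, hab⟩ := Fintype.exists_pair_of_one_lt_card (by omega : 1 < Fintype.card V)
  have hbdd : BddAbove {m | ∃ x y : V, x ≠ y ∧ (DG G x y).card = m} := by
    refine ⟨Fintype.card V, ?_⟩
    rintro m ⟨x, y, -, rfl⟩
    exact (Finset.card_le_card (Finset.filter_subset _ _)).trans (by simp)
  have hmem : ∀ x y : V, x ≠ y → (DG G x y).card ≤ frakdStar G := by
    intro x y hxy
    exact le_csSup hbdd ⟨x, y, hxy, rfl⟩
  constructor
  · intro h2
    have hcomp : ∀ x y : V, x ≠ y → G.Adj x y := by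
      by_contra hc
      push_neg at hc
      obtain ⟨x, y, hxy, hna⟩ := hc
      have hd1 : 0 < G.dist x y := hG.pos_dist_of_ne hxy
      have hd2 : 2 ≤ G.dist x y := by
        have hne1 : G.dist x y ≠ 1 := fun h => hna (SimpleGraph.dist_eq_one_iff_adj.mp h)
        omega
      obtain ⟨p, hp⟩ := hG.exists_walk_length_eq_dist x y
      cases p with
      | nil => simp at hp; rw [SimpleGraph.dist_self] at hd2; omega
      | cons ha q =>
        rename_i z
        have hq : q.length = G.dist x y - 1 := by
          simp [SimpleGraph.Walk.length_cons] at hp; omega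
        have hzy_le : G.dist z y ≤ G.dist x y - 1 := hq ▸ SimpleGraph.dist_le q
        have hxz : G.dist x z = 1 := SimpleGraph.dist_eq_one_iff_adj.mpr ha
        have hzy_ge : G.dist x y ≤ 1 + G.dist z y := by
          calc G.dist x y ≤ G.dist x z + G.dist z y := hG.dist_triangle
            _ = 1 + G.dist z y := by rw [hxz]
        have hzy : G.dist z y = G.dist x y - 1 := by omega
        have hxne : x ≠ z := G.ne_of_adj ha
        have hyne : y ≠ x := hxy.symm
        have hyz : y ≠ z := by
          intro h; rw [← h] at hzy; rw [SimpleGraph.dist_self] at hzy; omega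
        have hsub : ({x, z, y} : Finset V) ⊆ DG G x z := by
          intro w hw
          simp only [Finset.mem_insert, Finset.mem_singleton] at hw
          simp only [DG, Finset.mem_filter, Finset.mem_univ, true_and]
          rcases hw with rfl | rfl | rfl
          · rw [SimpleGraph.dist_self, hxz]; omega
          · rw [SimpleGraph.dist_comm, hxz, SimpleGraph.dist_self]; omega
          · rw [SimpleGraph.dist_comm (v := x), SimpleGraph.dist_comm (v := z), hzy]
            omega
        have hcard : 3 ≤ (DG G x z).card := by
          have : ({x, z, y} : Finset V).card = 3 := by
            rw [Finset.card_insert_of_notMem (by simp [hxne, hyne.symm]),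
              Finset.card_insert_of_notMem (by simp [hyz.symm])]
            simp
          exact this ▸ Finset.card_le_card hsub
        have := (hmem x z hxne).trans_eq h2
        omega
    -- G = ⊤
    have hGtop : G = ⊤ := by
      ext u v
      simp only [SimpleGraph.top_adj]
      exact ⟨G.ne_of_adj, hcomp u v⟩
    subst hGtop
    exact ⟨SimpleGraph.Iso.completeGraph (Fintype.equivFin V)⟩
  · rintro ⟨e⟩
    have hcomp : ∀ x y : V, x ≠ y → G.Adj x y := by
      intro x y hxy
      rw [← e.map_adj_iff]
      simp only [SimpleGraph.top_adj]
      exact fun h => hxy (e.injective h)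
    have hdist : ∀ z x : V, z ≠ x → G.dist z x = 1 := fun z x h =>
      SimpleGraph.dist_eq_one_iff_adj.mpr (hcomp z x h)
    have hDG : ∀ x y : V, x ≠ y → DG G x y = {x, y} := by
      intro x y hxy
      ext w
      simp only [DG, Finset.mem_filter, Finset.mem_univ, true_and, Finset.mem_insert,
        Finset.mem_singleton]
      constructor
      · intro hw
        by_contra hcon
        push_neg at hcon
        rw [hdist w x hcon.1, hdist w y hcon.2] at hw
        exact hw rfl
      · rintro (rfl | rfl)
        · rw [SimpleGraph.dist_self, hdist w y hxy]; omega
        · rw [SimpleGraph.dist_self, hdist w x hxy.symm]; omega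
    have hset : {m | ∃ x y : V, x ≠ y ∧ (DG G x y).card = m} = {2} := by
      ext m
      simp only [Set.mem_setOf_eq, Set.mem_singleton_iff]
      constructor
      · rintro ⟨x, y, hxy, rfl⟩
        rw [hDG x y hxy, Finset.card_insert_of_notMem (by simp [hxy]), Finset.card_singleton]
      · rintro rfl
        exact ⟨a, b, hab, by
          rw [hDG a b hab, Finset.card_insert_of_notMem (by simp [hab]),
            Finset.card_singleton]⟩
    rw [frakdStar, hset, csSup_singleton]
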